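/- Let (U, d_U) be a nonempty countable metric space such that for every finite nonempty metric space A there exists a non-expansive surjection from U onto A. Then there exists a surjective map q : U → ℕ such that max{q x, q y} ≤ d_U(x, y) whenever q x ≠ q y; that is, there exists a non-expansive surjection from U onto Ω. (Consequently a countable metric space is projectively universal for all finite metric spaces if and only if it is bi-projectible with Ω.) -/

import Mathlib

/-! Auxiliary development for `stmt_3`. -/

/-- The finite metric space `Ω_N` on `Fin (N+1)` with `d(i,j) = max i j` for `i ≠ j`. -/
def omegaDist (N : ℕ) (i j : Fin (N+1)) : ℝ := if i = j then 0 else max (i:ℕ) (j:ℕ)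

lemma omegaDist_self (N : ℕ) (i : Fin (N+1)) : omegaDist N i i = 0 := by simp [omegaDist]

lemma omegaDist_comm (N : ℕ) (i j : Fin (N+1)) : omegaDist N i j = omegaDist N j i := by
  unfold omegaDist
  rcases eq_or_ne i j with rfl | hij
  · simp
  · rw [if_neg hij, if_neg (Ne.symm hij), max_comm]

lemma omegaDist_triangle (N : ℕ) (i j k : Fin (N+1)) :
    omegaDist N i k ≤ omegaDist N i j + omegaDist N j k := by
  unfold omegaDist
  rcases eq_or_ne i k with rfl | hik
  · rw [if_pos rfl]
    have h1 : (0:ℝ) ≤ if i = j then (0:ℝ) else max (i:ℕ) (j:ℕ) := by positivity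
    have h2 : (0:ℝ) ≤ if j = i then (0:ℝ) else max (j:ℕ) (i:ℕ) := by positivity
    linarith
  · rw [if_neg hik]
    rcases eq_or_ne i j with rfl | hij
    · rw [if_pos rfl, if_neg hik]; simp
    · rcases eq_or_ne j k with rfl | hjk
      · rw [if_pos rfl, if_neg hij]; simp
      · rw [if_neg hij, if_neg hjk]
        rw [← Nat.cast_max, ← Nat.cast_max, ← Nat.cast_max, ← Nat.cast_add, Nat.cast_le]
        rcases max_cases (i:ℕ) (k:ℕ) with ⟨h1, _⟩ | ⟨h1, _⟩ <;> rw [h1] <;> omega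

lemma omegaDist_eq_zero (N : ℕ) (i j : Fin (N+1)) (hd : omegaDist N i j = 0) : i = j := by
  by_contra hij
  unfold omegaDist at hd
  rw [if_neg hij] at hd
  rw [← Nat.cast_max, Nat.cast_eq_zero, Nat.max_eq_zero_iff] at hd
  exact hij (Fin.ext (hd.1.trans hd.2.symm))

noncomputable def omegaMetric (N : ℕ) : MetricSpace (Fin (N+1)) where
  dist := omegaDist N
  dist_self := omegaDist_self N
  dist_comm := omegaDist_comm N
  dist_triangle := omegaDist_triangle N
  eq_of_dist_eq_zero := omegaDist_eq_zero N _ _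

section Chain

variable {U : Type} [MetricSpace U]

/-- `crel n x y` : `x` and `y` are joined by a chain with steps of length `< n`. -/
def crel (n : ℕ) (x y : U) : Prop :=
  Relation.ReflTransGen (fun a b : U => dist a b < (n:ℝ)) x y

lemma crel_refl (n : ℕ) (x : U) : crel n x x := Relation.ReflTransGen.refl

lemma crel_symm {n : ℕ} {x y : U} (h : crel n x y) : crel n y x :=
  (@Relation.ReflTransGen.symmetric _ _ ⟨fun a b hab => by rwa [dist_comm] at hab⟩).symm _ _ h

lemma crel_trans {n : ℕ} {x y z : U} (h1 : crel n x y) (h2 : crel n y z) : crel n x z :=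
  Relation.ReflTransGen.trans h1 h2

lemma crel_mono {n m : ℕ} (hnm : n ≤ m) {x y : U} (h : crel n x y) : crel m x y :=
  Relation.ReflTransGen.mono
    (fun a b hab => lt_of_lt_of_le hab (by exact_mod_cast hnm)) _ _ h

lemma le_dist_of_not_crel {n : ℕ} {x y : U} (h : ¬ crel n x y) : (n:ℝ) ≤ dist x y := by
  by_contra h'
  push_neg at h'
  exact h (Relation.ReflTransGen.single h')

/-- Fibers of a non-expansive map to `Ω_N` over values `≥ n` are closed under `crel n`. -/
lemma fiber_closed {N : ℕ} (f : U → Fin (N+1))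
    (hnon : ∀ x y : U, omegaDist N (f x) (f y) ≤ dist x y)
    {n : ℕ} {x z : U} (hx : n ≤ (f x : ℕ)) (hr : crel n x z) : f z = f x := by
  induction hr with
  | refl => rfl
  | tail hr1 hstep ih =>
    rename_i b c
    by_contra hne
    have h1 : omegaDist N (f b) (f c) ≤ dist b c := hnon b c
    have h2 : omegaDist N (f b) (f c) = max (((f b : ℕ)) : ℝ) (((f c : ℕ)) : ℝ) := by
      unfold omegaDist
      rw [if_neg (fun hh : f b = f c => hne (hh.symm.trans ih))]
    have h3 : (n:ℝ) ≤ max ((f b : ℕ) : ℝ) ((f c : ℕ) : ℝ) := by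
      have : (n:ℝ) ≤ ((f b : ℕ) : ℝ) := by rw [ih]; exact_mod_cast hx
      exact le_trans this (le_max_left _ _)
    have h4 : dist b c < (n:ℝ) := hstep
    rw [h2] at h1
    linarith

/-- The key consequence of projective universality: for each `n ≥ 1` (here `n+1`) and any
finite list of points, there is a point not chain-related (at scale `n+1`) to any of them. -/
lemma key_lemma
    (h : ∀ (A : Type) [MetricSpace A] [Fintype A] [Nonempty A],
      ∃ f : U → A, Function.Surjective f ∧ ∀ x y : U, dist (f x) (f y) ≤ dist x y)
    (n : ℕ) (l : List U) : ∃ x : U, ∀ y ∈ l, ¬ crel (n+1) x y := by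
  classical
  set m : ℕ := n + 1 with hm
  set N : ℕ := m + l.length with hN
  letI := omegaMetric N
  obtain ⟨f, hsurj, hnon⟩ := h (Fin (N+1))
  have hnon' : ∀ x y : U, omegaDist N (f x) (f y) ≤ dist x y := hnon
  set T : Finset ℕ := Finset.Icc m N with hT
  set V : Finset ℕ := (l.map fun y => ((f y : ℕ))).toFinset with hV
  have hcardT : T.card = l.length + 1 := by
    rw [hT, Nat.card_Icc]; omega
  have hcardV : V.card ≤ l.length := by
    calc V.card ≤ (l.map fun y => ((f y : ℕ))).length := List.toFinset_card_le _
    _ = l.length := List.length_map _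
  have hexk : ∃ k ∈ T, k ∉ V := by
    by_contra hc
    push_neg at hc
    have : T ⊆ V := fun k hk => hc k hk
    have := Finset.card_le_card this
    omega
  obtain ⟨k, hkT, hkV⟩ := hexk
  rw [hT, Finset.mem_Icc] at hkT
  obtain ⟨x, hx⟩ := hsurj ⟨k, by omega⟩
  refine ⟨x, fun y hy hr => ?_⟩
  have hxval : m ≤ (f x : ℕ) := by rw [hx]; exact hkT.1
  have := fiber_closed f hnon' hxval hr
  apply hkV
  rw [hV, List.mem_toFinset]
  refine List.mem_map.mpr ⟨y, hy, ?_⟩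
  rw [this, hx]

end Chain

/-- If a nonempty countable metric space `U` admits a non-expansive surjection onto
every finite nonempty metric space, then it admits a non-expansive surjection onto
the metric space `Ω = (ℕ, d_ω)` (where `d_ω(x,y) = max{x,y}` for `x ≠ y`). -/
theorem stmt_3 (U : Type) [MetricSpace U] [Countable U] [Nonempty U]
    (h : ∀ (A : Type) [MetricSpace A] [Fintype A] [Nonempty A],
      ∃ f : U → A, Function.Surjective f ∧ ∀ x y : U, dist (f x) (f y) ≤ dist x y) :
    ∃ q : U → ℕ, Function.Surjective q ∧
      ∀ x y : U, q x ≠ q y → ((max (q x) (q y) : ℕ) : ℝ) ≤ dist x y := by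
  classical
  obtain ⟨p⟩ := (inferInstance : Nonempty U)
  letI : Inhabited U := ⟨p⟩
  -- the recursively chosen lists and points
  let L : ℕ → List U := fun n =>
    Nat.rec [p] (fun k ih => (key_lemma h k ih).choose :: ih) n
  let X : ℕ → U := fun n => (L n).headI
  have hL0 : L 0 = [p] := rfl
  have hLs : ∀ k, L (k+1) = (key_lemma h k (L k)).choose :: L k := fun k => rfl
  have hXs : ∀ k, X (k+1) = (key_lemma h k (L k)).choose := fun k => rfl
  have spec : ∀ k, ∀ y ∈ L k, ¬ crel (k+1) (X (k+1)) y := by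
    intro k y hy
    rw [hXs k]
    exact (key_lemma h k (L k)).choose_spec y hy
  -- membership facts
  have hLmono : ∀ m n : ℕ, m ≤ n → ∀ y ∈ L m, y ∈ L n := by
    intro m n hmn
    induction n with
    | zero => intro y hy; rwa [Nat.le_zero.mp hmn] at hy
    | succ k ih =>
      rcases Nat.lt_or_ge m (k+1) with hlt | hge
      · intro y hy
        rw [hLs k]
        exact List.mem_cons_of_mem _ (ih (Nat.lt_succ_iff.mp hlt) y hy)
      · have : m = k + 1 := le_antisymm hmn hge
        intro y hy; rwa [this] at hy
  have hXmem : ∀ m, X m ∈ L m := by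
    intro m
    cases m with
    | zero =>
      have hx0 : X 0 = p := rfl
      rw [hx0, hL0]
      exact List.mem_singleton_self p
    | succ k => rw [hXs k, hLs k]; exact List.mem_cons_self
  have hpmem : ∀ n, p ∈ L n := by
    intro n
    exact hLmono 0 n (Nat.zero_le n) p (by rw [hL0]; exact List.mem_singleton_self p)
  -- uniqueness
  have uniq : ∀ (x : U) (a b : ℕ), crel (a+1) x (X (a+1)) → crel (b+1) x (X (b+1)) → a = b := by
    have aux : ∀ (x : U) (a b : ℕ), a < b →
        crel (a+1) x (X (a+1)) → crel (b+1) x (X (b+1)) → False := by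
      intro x a b hab h1 h2
      have h1' : crel (b+1) x (X (a+1)) := crel_mono (by omega) h1
      have h3 : crel (b+1) (X (b+1)) (X (a+1)) := crel_trans (crel_symm h2) h1'
      exact spec b (X (a+1)) (hLmono (a+1) b hab (X (a+1)) (hXmem (a+1))) h3
    intro x a b h1 h2
    rcases Nat.lt_trichotomy a b with hlt | heq | hgt
    · exact absurd (aux x a b hlt h1 h2) (fun hf => hf)
    · exact heq
    · exact absurd (aux x b a hgt h2 h1) (fun hf => hf)
  -- the map
  let q : U → ℕ := fun x => if hx : ∃ n, crel (n+1) x (X (n+1)) then hx.choose + 1 else 0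
  have q_pos_spec : ∀ x n, q x = n + 1 → crel (n+1) x (X (n+1)) := by
    intro x n hq
    by_cases hx : ∃ k, crel (k+1) x (X (k+1))
    · have hq' : q x = hx.choose + 1 := dif_pos hx
      have : hx.choose = n := by omega
      have := hx.choose_spec
      rwa [‹hx.choose = n›] at this
    · have : q x = 0 := dif_neg hx
      omega
  have q_zero_spec : ∀ x, q x = 0 → ¬ ∃ n, crel (n+1) x (X (n+1)) := by
    intro x hq hx
    have : q x = hx.choose + 1 := dif_pos hx
    omega
  have q_X : ∀ n, q (X (n+1)) = n + 1 := by
    intro n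
    have hex : ∃ k, crel (k+1) (X (n+1)) (X (k+1)) := ⟨n, crel_refl _ _⟩
    have hq : q (X (n+1)) = hex.choose + 1 := dif_pos hex
    have := hex.choose_spec
    have : hex.choose = n := uniq (X (n+1)) hex.choose n this (crel_refl _ _)
    omega
  have q_p : q p = 0 := by
    rcases Nat.eq_zero_or_pos (q p) with h0 | hpos
    · exact h0
    · exfalso
      obtain ⟨n, hn⟩ : ∃ n, q p = n + 1 := ⟨q p - 1, by omega⟩
      have hr := q_pos_spec p n hn
      exact spec n p (hpmem n) (crel_symm hr)
  refine ⟨q, ?_, ?_⟩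
  · intro n
    cases n with
    | zero => exact ⟨p, q_p⟩
    | succ k => exact ⟨X (k+1), q_X k⟩
  · -- main inequality
    have main2 : ∀ x y : U, q x < q y → ((max (q x) (q y) : ℕ) : ℝ) ≤ dist x y := by
      intro x y hlt
      obtain ⟨m, hm⟩ : ∃ m, q y = m + 1 := ⟨q y - 1, by omega⟩
      have hry : crel (m+1) y (X (m+1)) := q_pos_spec y m hm
      have hnr : ¬ crel (m+1) x y := by
        intro hr
        have hx' : crel (m+1) x (X (m+1)) := crel_trans hr hry
        rcases Nat.eq_zero_or_pos (q x) with h0 | hpos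
        · exact q_zero_spec x h0 ⟨m, hx'⟩
        · obtain ⟨n, hn⟩ : ∃ n, q x = n + 1 := ⟨q x - 1, by omega⟩
          have : n = m := uniq x n m (q_pos_spec x n hn) hx'
          omega
      have hd := le_dist_of_not_crel hnr
      have : max (q x) (q y) = m + 1 := by rw [max_eq_right (le_of_lt hlt), hm]
      rw [this]
      exact_mod_cast hd
    intro x y hne
    rcases Nat.lt_or_ge (q x) (q y) with hlt | hge
    · exact main2 x y hlt
    · have hlt : q y < q x := lt_of_le_of_ne hge (Ne.symm hne)
      have := main2 y x hlt
      rwa [max_comm, dist_comm] at this
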